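/- Let S be a string of length n. For every i with 1 ≤ i ≤ n, P[i] equals the number of indices j with 1 ≤ j ≤ i such that the prefix S[1..j] is closed, minus one. Equivalently, P[i] = (Σ_{j=1}^{i} OC[j]) − 1. -/

import Mathlib

variable {α : Type*}

/-- `β` is a border of `S`: a proper (possibly empty) prefix that is also a suffix. -/
def IsBorder (β S : List α) : Prop :=
  β ≠ S ∧ β <+: S ∧ β <:+ S

/-- `v` occurs in `T` at (0-based) position `p`. -/
def OccursAt (v T : List α) (p : ℕ) : Prop :=
  p + v.length ≤ T.length ∧ v <+: T.drop p

/-- A string is closed if it has length 1 or it has a border with no internal occurrence. -/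
def IsClosedWord (S : List α) : Prop :=
  S.length = 1 ∨ ∃ β, IsBorder β S ∧
    ∀ p, OccursAt β S p → p = 0 ∨ p = S.length - β.length

open Classical in
/-- `OCval S i = 1` if the prefix `S[1..i]` is closed, and `0` otherwise. -/
noncomputable def OCval (S : List α) (i : ℕ) : ℕ :=
  if IsClosedWord (S.take i) then 1 else 0

/-- `Parr S i` is the length of the longest prefix of `S[1..i]` having at least
two (possibly overlapping) occurrences in `S[1..i]`. -/
noncomputable def Parr (S : List α) (i : ℕ) : ℕ :=
  sSup {ℓ | ∃ p q : ℕ, p < q ∧ OccursAt (S.take ℓ) (S.take i) p ∧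
    OccursAt (S.take ℓ) (S.take i) q}

/-- `Barr S i` is the length of the longest border of `S[1..i]`. -/
noncomputable def Barr (S : List α) (i : ℕ) : ℕ :=
  sSup {ℓ | IsBorder (S.take ℓ) (S.take i)}

/-- `Bord S i` is the set of lengths of borders of `S[1..i]`. -/
def Bord (S : List α) (i : ℕ) : Set ℕ :=
  {ℓ | IsBorder (S.take ℓ) (S.take i)}

/-- The substring `S[i..j]` (1-based, inclusive). -/
def Substr (S : List α) (i j : ℕ) : List α :=
  (S.take j).drop (i - 1)

/-- `S[i..j]` is a maximal closed substring of `S`. -/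
def IsMCS (S : List α) (i j : ℕ) : Prop :=
  1 ≤ i ∧ i ≤ j ∧ j ≤ S.length ∧ IsClosedWord (Substr S i j) ∧
    (j = S.length ∨ ¬ IsClosedWord (Substr S i (j + 1))) ∧
    (i = 1 ∨ ¬ IsClosedWord (Substr S (i - 1) j))

open Classical in
/-- Number of maximal blocks of consecutive `1`s in the OC array of `S`. -/
noncomputable def ocRuns (S : List α) : ℕ :=
  ((Finset.Icc 1 S.length).filter
    (fun i => OCval S i = 1 ∧ (i = 1 ∨ OCval S (i - 1) = 0))).card

/-- The OC array of `S` as a list (1-based entries). -/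
noncomputable def ocList (S : List α) : List ℕ :=
  (List.range S.length).map (fun j => OCval S (j + 1))

section AuxLemmas

variable {α : Type*}

/-- Simplified description of the set of lengths of repeated prefixes. -/
def RSet (S : List α) (i : ℕ) : Set ℕ :=
  {ℓ | ∃ q, 1 ≤ q ∧ q + ℓ ≤ i ∧ S.take ℓ <+: S.drop q}

lemma occursAt_take_iff {S : List α} {i ℓ p : ℕ} (hℓ : ℓ ≤ i) (hi : i ≤ S.length) :
    OccursAt (S.take ℓ) (S.take i) p ↔ p + ℓ ≤ i ∧ S.take ℓ <+: S.drop p := by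
  have hl : (S.take ℓ).length = ℓ := by rw [List.length_take]; omega
  have hi' : (S.take i).length = i := by rw [List.length_take]; omega
  unfold OccursAt
  rw [hl, hi', List.drop_take, List.prefix_take_iff, hl]
  constructor
  · rintro ⟨h1, h2, _⟩; exact ⟨h1, h2⟩
  · rintro ⟨h1, h2⟩; exact ⟨h1, h2, by omega⟩

lemma repSet_eq {S : List α} {i : ℕ} (hi1 : 1 ≤ i) (hin : i ≤ S.length) :
    {ℓ | ∃ p q : ℕ, p < q ∧ OccursAt (S.take ℓ) (S.take i) p ∧
      OccursAt (S.take ℓ) (S.take i) q} = RSet S i := by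
  ext ℓ
  simp only [Set.mem_setOf_eq, RSet]
  constructor
  · rintro ⟨p, q, hpq, _, hq⟩
    have hq1 : 1 ≤ q := by omega
    have hlen : q + (S.take ℓ).length ≤ (S.take i).length := hq.1
    have hti : (S.take i).length = i := by rw [List.length_take]; omega
    by_cases hl : ℓ ≤ S.length
    · have htl : (S.take ℓ).length = ℓ := by rw [List.length_take]; omega
      have := (occursAt_take_iff (by omega) hin).mp hq
      exact ⟨q, hq1, this.1, this.2⟩
    · exfalso
      have : (S.take ℓ).length = S.length := by rw [List.length_take]; omega
      omega
  · rintro ⟨q, hq1, hqi, hpre⟩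
    refine ⟨0, q, hq1, ?_, ?_⟩
    · exact (occursAt_take_iff (by omega) hin).mpr
        ⟨by omega, by simpa using List.take_prefix ℓ S⟩
    · exact (occursAt_take_iff (by omega) hin).mpr ⟨hqi, hpre⟩

lemma parr_eq {S : List α} {i : ℕ} (hi1 : 1 ≤ i) (hin : i ≤ S.length) :
    Parr S i = sSup (RSet S i) := by rw [Parr, repSet_eq hi1 hin]

lemma rset_bdd (S : List α) (i : ℕ) : BddAbove (RSet S i) :=
  ⟨i, fun ℓ ⟨q, hq1, hqi, _⟩ => by omega⟩

lemma zero_mem_rset {S : List α} {i : ℕ} (hi1 : 1 ≤ i) : 0 ∈ RSet S i :=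
  ⟨1, le_refl 1, by omega, by simp⟩

lemma parr_mem {S : List α} {i : ℕ} (hi1 : 1 ≤ i) (hin : i ≤ S.length) :
    Parr S i ∈ RSet S i := by
  rw [parr_eq hi1 hin]
  exact Nat.sSup_mem ⟨0, zero_mem_rset hi1⟩ (rset_bdd S i)

lemma le_parr {S : List α} {i ℓ : ℕ} (hi1 : 1 ≤ i) (hin : i ≤ S.length)
    (h : ℓ ∈ RSet S i) : ℓ ≤ Parr S i := by
  rw [parr_eq hi1 hin]; exact le_csSup (rset_bdd S i) h

lemma parr_le {S : List α} {i m : ℕ} (hi1 : 1 ≤ i) (hin : i ≤ S.length)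
    (h : ∀ ℓ ∈ RSet S i, ℓ ≤ m) : Parr S i ≤ m := by
  rw [parr_eq hi1 hin]
  exact csSup_le ⟨0, zero_mem_rset hi1⟩ h

lemma parr_one {S : List α} (h : 1 ≤ S.length) : Parr S 1 = 0 :=
  Nat.le_zero.mp (parr_le le_rfl h (fun ℓ ⟨q, hq1, hqi, _⟩ => by omega))

lemma ocval_one {S : List α} (h : 1 ≤ S.length) : OCval S 1 = 1 := by
  rw [OCval, if_pos]
  exact Or.inl (by rw [List.length_take]; omega)

lemma parr_succ {S : List α} {i : ℕ} (hi2 : 2 ≤ i) (hin : i ≤ S.length) :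
    Parr S i = Parr S (i - 1) + OCval S i := by
  set m := Parr S (i - 1) with hm
  have hi1 : 1 ≤ i := by omega
  have h1 : 1 ≤ i - 1 := by omega
  have h1n : i - 1 ≤ S.length := by omega
  have hti : (S.take i).length = i := by rw [List.length_take]; omega
  have hmem : m ∈ RSet S (i - 1) := parr_mem h1 h1n
  obtain ⟨qm, hqm1, hqmi, hpm⟩ := hmem
  -- (a) monotonicity
  have ha : m ≤ Parr S i := le_parr hi1 hin ⟨qm, hqm1, by omega, hpm⟩
  -- (b) increase by at most one
  have hb : Parr S i ≤ m + 1 := by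
    apply parr_le hi1 hin
    rintro ℓ ⟨q, hq1, hqi, hpre⟩
    by_cases hc : q + ℓ ≤ i - 1
    · have : ℓ ≤ m := le_parr h1 h1n ⟨q, hq1, hc, hpre⟩
      omega
    · rcases Nat.eq_zero_or_pos ℓ with h0 | h0
      · omega
      · have : ℓ - 1 ≤ m := le_parr h1 h1n ⟨q, hq1, by omega,
          (List.take_prefix_take_left (by omega)).trans hpre⟩
        omega
  by_cases hclosed : IsClosedWord (S.take i)
  · -- closed case : Parr S i = m + 1
    rw [OCval, if_pos hclosed]
    rcases hclosed with hlen1 | ⟨β, ⟨hne, hβpre, hβsuf⟩, hocc⟩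
    · omega
    · set b := β.length with hbdef
      have hβeq : β = S.take b := by
        have := List.prefix_iff_eq_take.mp hβpre
        rw [this, List.take_take]
        congr 1
        have : b ≤ i := by
          have := hβpre.length_le; omega
        omega
      have hble : b ≤ i := by have := hβpre.length_le; omega
      have hblt : b < i := by
        rcases Nat.lt_or_ge b i with h | h
        · exact h
        · exact absurd (hβpre.eq_of_length (by omega)) hne
      have hb1 : 1 ≤ b := by
        by_contra h0
        have hb0 : b = 0 := by omega
        have hβnil : β = [] := List.length_eq_zero_iff.mp (by omega)
        have : (1 : ℕ) = 0 ∨ (1 : ℕ) = (S.take i).length - β.length := by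
          apply hocc 1
          exact ⟨by rw [hti]; omega, by rw [hβnil]; exact List.nil_prefix⟩
        omega
      -- the border occurs as a suffix, so b ∈ RSet S i
      obtain ⟨w, hw⟩ := hβsuf
      have hwlen : w.length = i - b := by
        have := congrArg List.length hw
        simp at this
        omega
      have hdropβ : (S.take i).drop (i - b) = β := by
        rw [← hw, ← hwlen, List.drop_append_of_le_length le_rfl]
        simp
      have hβocc : S.take b <+: S.drop (i - b) := by
        rw [← hβeq, ← hdropβ, List.drop_take]
        exact List.take_prefix _ _
      have hbP : b ≤ Parr S i := le_parr hi1 hin ⟨i - b, by omega, by omega, hβocc⟩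
      -- suppose Parr S i ≤ m; derive internal occurrence of β
      rcases Nat.lt_or_ge m (Parr S i) with h | h
      · omega
      · exfalso
        have hbm : b ≤ m := le_trans hbP h
        have : qm = 0 ∨ qm = (S.take i).length - β.length := by
          apply hocc qm
          rw [hβeq]
          exact (occursAt_take_iff (by omega) hin).mpr
            ⟨by omega, (List.take_prefix_take_left hbm).trans hpm⟩
        rw [hti, ← hbdef] at this
        omega
  · -- non-closed case : Parr S i = m
    rw [OCval, if_neg hclosed]
    rcases Nat.lt_or_ge m (Parr S i) with h | h
    · exfalso
      apply hclosed
      have hP : Parr S i = m + 1 := by omega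
      obtain ⟨q, hq1, hqi, hpre⟩ := parr_mem hi1 hin
      rw [hP] at hqi hpre
      have hqieq : q + (m + 1) = i := by
        rcases Nat.lt_or_ge (q + (m + 1)) i with hlt | hge
        · exfalso
          have : m + 1 ≤ m := le_parr h1 h1n ⟨q, hq1, by omega, hpre⟩
          omega
        · omega
      have hm1i : m + 1 < i := by omega
      have hulen : (S.take (m + 1)).length = m + 1 := by rw [List.length_take]; omega
      have hdroplen : ((S.take i).drop q).length = m + 1 := by
        rw [List.length_drop, hti]; omega
      have husuf : S.take (m + 1) = (S.take i).drop q := by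
        apply List.IsPrefix.eq_of_length _ (by omega)
        rw [List.drop_take, List.prefix_take_iff]
        exact ⟨hpre, by omega⟩
      refine Or.inr ⟨S.take (m + 1), ⟨?_, ?_, ?_⟩, ?_⟩
      · intro hcontra
        have := congrArg List.length hcontra
        rw [hulen, hti] at this
        omega
      · exact List.take_prefix_take_left (by omega)
      · rw [husuf]; exact List.drop_suffix _ _
      · intro p hp
        rw [hti, hulen]
        have hp' := (occursAt_take_iff (by omega) hin).mp hp
        rcases Nat.eq_zero_or_pos p with h0 | h0
        · exact Or.inl h0
        · right
          rcases Nat.lt_or_ge (p + (m + 1)) i with hlt | hge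
          · exfalso
            have : m + 1 ≤ m := le_parr h1 h1n ⟨p, h0, by omega, hp'.2⟩
            omega
          · omega
    · omega

end AuxLemmas
/-- For every `1 ≤ i ≤ n`, `P[i] = (Σ_{j=1}^{i} OC[j]) − 1`. -/
theorem statement_0 {α : Type*} (S : List α) (i : ℕ)
    (hi1 : 1 ≤ i) (hin : i ≤ S.length) :
    Parr S i = (∑ j ∈ Finset.Icc 1 i, OCval S j) - 1 := by
  induction i, hi1 using Nat.le_induction with
  | base =>
    rw [parr_one hin]
    simp [ocval_one hin]
  | succ i hi ih =>
    have hn1 : 1 ≤ S.length := by omega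
    have hstep : Parr S (i + 1) = Parr S i + OCval S (i + 1) := by
      have := parr_succ (S := S) (i := i + 1) (by omega) hin
      simpa using this
    have hsum1 : 1 ≤ ∑ j ∈ Finset.Icc 1 i, OCval S j := by
      calc 1 = OCval S 1 := (ocval_one hn1).symm
        _ ≤ ∑ j ∈ Finset.Icc 1 i, OCval S j :=
          Finset.single_le_sum (fun _ _ => Nat.zero_le _)
            (by simp [Finset.mem_Icc]; omega)
    rw [Finset.sum_Icc_succ_top (by omega), hstep, ih (by omega)]
    omega
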